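/- Let K be a field, let e < n, and let F = Σ_{i=1}^{e-1} F_i Q_{i,i+1} + Σ_{j=e+1}^{n} G_j x_j where Q_{i,j} = x_i x_{j-1} − x_{i-1} x_j, the F_i, G_j are homogeneous of the appropriate degrees, F_1 = x_0^{d-2} and G_n = x_e^{d-1} with d ≥ 2. Then V(F) is smooth at every point of the rational normal curve C = {(s^e : … : t^e : 0 : ⋯ : 0)}: for (s,t) ≠ (0,0), the gradient of F at the corresponding point of C is nonzero. -/

import Mathlib

open MvPolynomial
open Fin.NatCast

/-- The hypersurface `F = Σ_{i=1}^{e-1} F_i Q_{i,i+1} + Σ_{j=e+1}^{n} G_j x_j`,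
with `Q_{i,i+1} = x_i x_i − x_{i-1} x_{i+1}`. -/
noncomputable def stmt14F (K : Type*) [Field K] (n e : ℕ)
    (Fc G : ℕ → MvPolynomial (Fin (n + 1)) K) : MvPolynomial (Fin (n + 1)) K :=
  (∑ i ∈ Finset.Icc 1 (e - 1),
      Fc i * (X (i : Fin (n + 1)) * X (i : Fin (n + 1))
        - X ((i - 1 : ℕ) : Fin (n + 1)) * X ((i + 1 : ℕ) : Fin (n + 1))))
    + ∑ j ∈ Finset.Icc (e + 1) n, G j * X (j : Fin (n + 1))

/-- for `F = Σ F_i Q_{i,i+1} + Σ G_j x_j` with `F_1 = x_0^{d-2}`,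
`G_n = x_e^{d-1}` and homogeneous `F_i`, `G_j`, the hypersurface `V(F)` is smooth
at every point of the degree-`e` rational normal curve `(s^e : ⋯ : t^e : 0 : ⋯ : 0)`. -/
theorem stmt_14 (K : Type*) [Field K] (n e d : ℕ) (he : 2 ≤ e) (hen : e < n)
    (hd : 2 ≤ d) (Fc G : ℕ → MvPolynomial (Fin (n + 1)) K)
    (hF1 : Fc 1 = X ((0 : ℕ) : Fin (n + 1)) ^ (d - 2))
    (hGn : G n = X ((e : ℕ) : Fin (n + 1)) ^ (d - 1))
    (hFhom : ∀ i, (Fc i).IsHomogeneous (d - 2))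
    (hGhom : ∀ j, (G j).IsHomogeneous (d - 1))
    (s t : K) (hst : ¬(s = 0 ∧ t = 0)) :
    ∃ k : Fin (n + 1),
      eval (fun m : Fin (n + 1) =>
          if (m : ℕ) ≤ e then s ^ (e - (m : ℕ)) * t ^ (m : ℕ) else 0)
        (pderiv k (stmt14F K n e Fc G)) ≠ 0 := by
  set p : Fin (n + 1) → K := fun m : Fin (n + 1) =>
      if (m : ℕ) ≤ e then s ^ (e - (m : ℕ)) * t ^ (m : ℕ) else 0 with hp
  have hcast : ∀ i : ℕ, i ≤ n → (((i : Fin (n + 1))) : ℕ) = i := fun i hi =>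
    Fin.val_cast_of_lt (by omega)
  have hne : ∀ i j : ℕ, i ≤ n → j ≤ n → i ≠ j →
      ((i : Fin (n + 1)) ≠ (j : Fin (n + 1))) := by
    intro i j hi hj h hh
    exact h (by rw [← hcast i hi, ← hcast j hj, hh])
  have hpX : ∀ i : ℕ, i ≤ e →
      eval p (X (i : Fin (n + 1)) : MvPolynomial (Fin (n + 1)) K)
        = s ^ (e - i) * t ^ i := by
    intro i hi
    rw [eval_X, hp]
    simp only [hcast i (by omega), if_pos hi]
  have hpXgt : ∀ j : ℕ, e < j → j ≤ n →
      eval p (X (j : Fin (n + 1)) : MvPolynomial (Fin (n + 1)) K) = 0 := by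
    intro j hj hjn
    rw [eval_X, hp]
    simp only [hcast j hjn]
    rw [if_neg (by omega)]
  have hQ : ∀ i ∈ Finset.Icc 1 (e - 1),
      eval p (X (i : Fin (n + 1)) * X (i : Fin (n + 1))
        - X ((i - 1 : ℕ) : Fin (n + 1)) * X ((i + 1 : ℕ) : Fin (n + 1))) = 0 := by
    intro i hi
    simp only [Finset.mem_Icc] at hi
    rw [map_sub, map_mul, map_mul, hpX i (by omega), hpX (i - 1) (by omega),
      hpX (i + 1) (by omega)]
    obtain ⟨a, ha⟩ : ∃ a, e - i = a + 1 := ⟨e - i - 1, by omega⟩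
    obtain ⟨b, hb⟩ : ∃ b, i = b + 1 := ⟨i - 1, by omega⟩
    have h1 : e - (i - 1) = a + 2 := by omega
    have h2 : e - (i + 1) = a := by omega
    have h3 : i - 1 = b := by omega
    have h4 : i + 1 = b + 2 := by omega
    rw [h1, h2, h3, h4, ha, hb]
    ring
  -- expand the gradient
  have hexp : ∀ k : Fin (n + 1),
      eval p (pderiv k (stmt14F K n e Fc G)) =
        (∑ i ∈ Finset.Icc 1 (e - 1),
          eval p (pderiv k (Fc i * (X (i : Fin (n + 1)) * X (i : Fin (n + 1))
            - X ((i - 1 : ℕ) : Fin (n + 1)) * X ((i + 1 : ℕ) : Fin (n + 1))))))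
        + ∑ j ∈ Finset.Icc (e + 1) n,
            eval p (pderiv k (G j * X (j : Fin (n + 1)))) := by
    intro k
    rw [stmt14F, map_add, map_add, map_sum, map_sum, map_sum, map_sum]
  by_cases ht : t = 0
  · -- then s ≠ 0, use the derivative in direction 2
    have hs : s ≠ 0 := fun h => hst ⟨h, ht⟩
    subst ht
    refine ⟨((2 : ℕ) : Fin (n + 1)), ?_⟩
    rw [hexp]
    have hz : ∀ m : ℕ, 1 ≤ m → m ≤ n →
        eval p (X (m : Fin (n + 1)) : MvPolynomial (Fin (n + 1)) K) = 0 := by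
      intro m h1 h2
      by_cases hme : m ≤ e
      · rw [hpX m hme, zero_pow (by omega), mul_zero]
      · exact hpXgt m (by omega) h2
    have hsum2 : (∑ j ∈ Finset.Icc (e + 1) n,
        eval p (pderiv ((2 : ℕ) : Fin (n + 1)) (G j * X (j : Fin (n + 1))))) = 0 := by
      refine Finset.sum_eq_zero ?_
      intro j hj
      simp only [Finset.mem_Icc] at hj
      rw [pderiv_mul, pderiv_X_of_ne (hne j 2 (by omega) (by omega) (by omega)),
        mul_zero, add_zero, map_mul, hpXgt j (by omega) (by omega), mul_zero]
    rw [hsum2, add_zero]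
    rw [Finset.sum_eq_single_of_mem 1 (by simp only [Finset.mem_Icc]; omega)]
    · -- the i = 1 term
      rw [pderiv_mul, map_add, map_mul, map_mul,
        hQ 1 (by simp only [Finset.mem_Icc]; omega), mul_zero, zero_add]
      have h01 : ((1 - 1 : ℕ) : Fin (n + 1)) = ((0 : ℕ) : Fin (n + 1)) := by norm_num
      have e0 : eval p (X ((1 - 1 : ℕ) : Fin (n + 1)) : MvPolynomial (Fin (n + 1)) K)
          = s ^ e := by
        rw [h01, hpX 0 (by omega)]
        simp
      have e1 : eval p (X ((1 : ℕ) : Fin (n + 1)) : MvPolynomial (Fin (n + 1)) K) = 0 :=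
        hz 1 (by omega) (by omega)
      have hd2 : pderiv ((2 : ℕ) : Fin (n + 1))
          (X ((1 + 1 : ℕ) : Fin (n + 1)) : MvPolynomial (Fin (n + 1)) K) = 1 := by
        norm_num [pderiv_X_self]
      have hd0 : pderiv ((2 : ℕ) : Fin (n + 1))
          (X ((1 - 1 : ℕ) : Fin (n + 1)) : MvPolynomial (Fin (n + 1)) K) = 0 := by
        rw [h01]
        exact pderiv_X_of_ne (hne 0 2 (by omega) (by omega) (by omega))
      rw [map_sub, pderiv_mul, pderiv_mul, hd2, hd0]
      rw [hF1]
      simp only [map_add, map_sub, map_mul, map_pow, map_one, e0, e1, mul_one,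
        mul_zero, zero_mul, zero_add, add_zero, zero_sub, zero_mul]
      exact mul_ne_zero (pow_ne_zero _ (pow_ne_zero _ hs))
        (neg_ne_zero.mpr (pow_ne_zero _ hs))
    · -- other terms vanish
      intro i hi hi1
      simp only [Finset.mem_Icc] at hi
      rw [pderiv_mul, map_add, map_mul, map_mul,
        hQ i (by simp only [Finset.mem_Icc]; omega), mul_zero, zero_add]
      have ei : eval p (X (i : Fin (n + 1)) : MvPolynomial (Fin (n + 1)) K) = 0 :=
        hz i (by omega) (by omega)
      have ei1 : eval p (X ((i + 1 : ℕ) : Fin (n + 1)) : MvPolynomial (Fin (n + 1)) K)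
          = 0 := hz (i + 1) (by omega) (by omega)
      have hdi1 : pderiv ((2 : ℕ) : Fin (n + 1))
          (X ((i + 1 : ℕ) : Fin (n + 1)) : MvPolynomial (Fin (n + 1)) K) = 0 :=
        pderiv_X_of_ne (hne (i + 1) 2 (by omega) (by omega) (by omega))
      rw [map_sub, pderiv_mul, pderiv_mul, hdi1, mul_zero, add_zero,
        map_sub, map_add, map_mul, map_mul, map_mul, ei, ei1]
      ring
  · -- t ≠ 0, use derivative in direction n
    refine ⟨((n : ℕ) : Fin (n + 1)), ?_⟩
    rw [hexp]
    have hsum1 : (∑ i ∈ Finset.Icc 1 (e - 1),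
        eval p (pderiv ((n : ℕ) : Fin (n + 1)) (Fc i * (X (i : Fin (n + 1)) * X (i : Fin (n + 1))
          - X ((i - 1 : ℕ) : Fin (n + 1)) * X ((i + 1 : ℕ) : Fin (n + 1)))))) = 0 := by
      refine Finset.sum_eq_zero ?_
      intro i hi
      have hi' := Finset.mem_Icc.mp hi
      rw [pderiv_mul, map_add, map_mul, map_mul, hQ i hi, mul_zero, zero_add]
      rw [map_sub, pderiv_mul, pderiv_mul,
        pderiv_X_of_ne (hne i n (by omega) (by omega) (by omega)),
        pderiv_X_of_ne (hne (i - 1) n (by omega) (by omega) (by omega)),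
        pderiv_X_of_ne (hne (i + 1) n (by omega) (by omega) (by omega))]
      simp
    rw [hsum1, zero_add]
    rw [Finset.sum_eq_single_of_mem n (by simp only [Finset.mem_Icc]; omega)]
    · rw [pderiv_mul, pderiv_X_self, mul_one, map_add, map_mul,
        hpXgt n (by omega) (by omega), mul_zero, zero_add, hGn]
      rw [map_pow, hpX e (by omega)]
      simp only [Nat.sub_self, pow_zero, one_mul]
      exact pow_ne_zero _ (pow_ne_zero _ ht)
    · intro j hj hjn
      simp only [Finset.mem_Icc] at hj
      rw [pderiv_mul, pderiv_X_of_ne (hne j n (by omega) (by omega) hjn),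
        mul_zero, add_zero, map_mul, hpXgt j (by omega) (by omega), mul_zero]
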